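/- Let G be a finite connected graph and let (H_1, ..., H_ℓ) be a connected decomposition of G of width k (the vertex sets of the H_i partition V(G), each H_i is connected, and for every i and every component C of G minus the first i parts, at most k of the parts H_1,...,H_i have an edge to C). Then the graph H obtained from G by contracting each H_i to a single vertex has tree-width at most k. -/

import Mathlib

open SimpleGraph

variable {V : Type} [Fintype V]

/-- The vertex sets `H 0, …, H (ℓ-1)` form a partition of `V`. -/
def IsDecomp {ℓ : ℕ} (H : Fin ℓ → Set V) : Prop :=
  (∀ i, (H i).Nonempty) ∧ (∀ i j, i ≠ j → Disjoint (H i) (H j)) ∧ (∀ v : V, ∃ i, v ∈ H i)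

/-- The union of the parts strictly before `i`. -/
def before {ℓ : ℕ} (H : Fin ℓ → Set V) (i : Fin ℓ) : Set V :=
  {v | ∃ j, j < i ∧ v ∈ H j}

/-- `C` is a (connected) component of `G − U`. -/
def IsCompOf (G : SimpleGraph V) (U C : Set V) : Prop :=
  C.Nonempty ∧ Disjoint C U ∧ (G.induce C).Connected ∧
    ∀ u ∈ C, ∀ v : V, v ∉ U → G.Adj u v → v ∈ C

/-- There is an edge of `G` between `A` and `C`. -/
def LinkedTo (G : SimpleGraph V) (A C : Set V) : Prop :=
  ∃ u ∈ A, ∃ v ∈ C, G.Adj u v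

/-- The decomposition has width at most `k`: for every `i` and every component
`C` of `G` minus the parts before `i`, at most `k` of the earlier parts have an
edge to `C`. -/
def WidthLE (G : SimpleGraph V) {ℓ : ℕ} (H : Fin ℓ → Set V) (k : ℕ) : Prop :=
  ∀ i : Fin ℓ, ∀ C : Set V, IsCompOf G (before H i) C →
    {j : Fin ℓ | j < i ∧ LinkedTo G (H j) C}.ncard ≤ k

/-- The decomposition is `f`-flat: each part `H i` `f`-spreads on the graph
obtained by deleting the earlier parts, i.e. for every `r` and every vertex `v`
outside the earlier parts, at most `f r` vertices of `H i` are reachable from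
`v` by a walk of length at most `r` avoiding the earlier parts. -/
def IsFlat (G : SimpleGraph V) {ℓ : ℕ} (H : Fin ℓ → Set V) (f : ℕ → ℕ) : Prop :=
  ∀ i : Fin ℓ, ∀ r : ℕ, ∀ v : V, v ∉ before H i →
    {u | u ∈ H i ∧ ∃ p : G.Walk v u, p.length ≤ r ∧
      ∀ w ∈ p.support, w ∉ before H i}.ncard ≤ f r

/-- Every part induces a connected subgraph. -/
def IsConnectedDecomp (G : SimpleGraph V) {ℓ : ℕ} (H : Fin ℓ → Set V) : Prop :=
  ∀ i, (G.induce (H i)).Connected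

/-- `P` is the vertex set of an isometric path of `G` inside `S`: a path whose
support lies in `S` and which is a shortest among all walks in `S` between its
endpoints. -/
def IsIsomPathIn (G : SimpleGraph V) (S P : Set V) : Prop :=
  ∃ (x y : V) (p : G.Walk x y), p.IsPath ∧ (∀ w ∈ p.support, w ∈ S) ∧
    P = {w | w ∈ p.support} ∧
    ∀ q : G.Walk x y, (∀ w ∈ q.support, w ∈ S) → p.length ≤ q.length

/-- `G` has a tree-decomposition of width at most `k`: a finite tree `T` with
bags `X t` covering all vertices and edges, such that every vertex induces a
connected subtree, and every bag has at most `k+1` vertices. -/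
def HasTreeDecompOfWidthLE (G : SimpleGraph V) (k : ℕ) : Prop :=
  ∃ (ι : Type) (_ : Fintype ι) (T : SimpleGraph ι) (X : ι → Finset V),
    T.IsTree ∧
    (∀ v : V, ∃ t, v ∈ X t) ∧
    (∀ u v : V, G.Adj u v → ∃ t, u ∈ X t ∧ v ∈ X t) ∧
    (∀ v : V, (T.induce {t | v ∈ X t}).Connected) ∧
    (∀ t, (X t).card ≤ k + 1)

/-- The tree-width of a finite graph. -/
noncomputable def treewidth (G : SimpleGraph V) : ℕ :=
  sInf {k | HasTreeDecompOfWidthLE G k}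
open SimpleGraph

namespace TWAux

variable {V : Type} {G : SimpleGraph V} {U : Set V} {u v w : V}

/-- The component of `u` in `G - U`. -/
def comp (G : SimpleGraph V) (U : Set V) (u : V) : Set V :=
  {v | ∃ p : G.Walk u v, ∀ w ∈ p.support, w ∉ U}

lemma mem_comp_self (hu : u ∉ U) : u ∈ comp G U u :=
  ⟨Walk.nil, by simpa using hu⟩

lemma comp_not_mem (hv : v ∈ comp G U u) : v ∉ U := by
  obtain ⟨p, hp⟩ := hv; exact hp v p.end_mem_support

lemma comp_trans (hv : v ∈ comp G U u) (hw : w ∈ comp G U v) : w ∈ comp G U u := by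
  obtain ⟨p, hp⟩ := hv; obtain ⟨q, hq⟩ := hw
  refine ⟨p.append q, fun x hx => ?_⟩
  rw [Walk.mem_support_append_iff] at hx
  exact hx.elim (hp x) (hq x)

lemma comp_symm (hv : v ∈ comp G U u) : u ∈ comp G U v := by
  obtain ⟨p, hp⟩ := hv
  exact ⟨p.reverse, fun x hx => hp x (by simpa [Walk.support_reverse] using hx)⟩

lemma comp_mono {U' : Set V} (hUU : U' ⊆ U) : comp G U u ⊆ comp G U' u := by
  rintro v ⟨p, hp⟩
  exact ⟨p, fun w hw hwU => hp w hw (hUU hwU)⟩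

lemma comp_closed (hv : v ∈ comp G U u) (hw : w ∉ U) (h : G.Adj v w) : w ∈ comp G U u :=
  comp_trans hv ⟨h.toWalk, by
    intro x hx
    simp only [Adj.toWalk, Walk.support_cons, Walk.support_nil, List.mem_cons,
      List.mem_singleton] at hx
    rcases hx with rfl | rfl | h'
    · exact comp_not_mem hv
    · exact hw
    · exact absurd h' List.not_mem_nil⟩

lemma reachable_induce_of_walk {s : Set V} {a b : V} (p : G.Walk a b)
    (hp : ∀ w ∈ p.support, w ∈ s) (ha : a ∈ s) (hb : b ∈ s) :
    (G.induce s).Reachable ⟨a, ha⟩ ⟨b, hb⟩ := by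
  induction p with
  | nil => exact Reachable.refl _
  | @cons a c b h q ih =>
    have hc : c ∈ s := hp c (by simp)
    have hadj : (G.induce s).Adj ⟨a, ha⟩ ⟨c, hc⟩ := h
    exact hadj.reachable.trans (ih (fun w hw => hp w (by simp [hw])) hc hb)

lemma walk_of_induce_walk {s : Set V} {a b : s} (p : (G.induce s).Walk a b) :
    ∃ q : G.Walk a.1 b.1, ∀ w ∈ q.support, w ∈ s := by
  induction p with
  | nil => exact ⟨Walk.nil, by simpa using a.2⟩
  | @cons a c b h q ih =>
    obtain ⟨q', hq'⟩ := ih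
    exact ⟨Walk.cons h q', by
      intro w hw
      have hw' : w ∈ a.1 :: q'.support := hw
      rcases List.mem_cons.mp hw' with rfl | hw
      · exact a.2
      · exact hq' w hw⟩

/-- A connected induced set all of whose elements avoid `U` is contained in the
component of any of its elements. -/
lemma subset_comp_of_induce_connected {s : Set V} (hs : (G.induce s).Connected)
    (hU : Disjoint s U) (hu : u ∈ s) : s ⊆ comp G U u := by
  intro v hv
  obtain ⟨p⟩ := hs.preconnected ⟨u, hu⟩ ⟨v, hv⟩
  obtain ⟨q, hq⟩ := walk_of_induce_walk p
  exact ⟨q, fun w hw => (Set.disjoint_left.mp hU) (hq w hw)⟩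

lemma isCompOf_comp (hu : u ∉ U) : IsCompOf G U (comp G U u) := by
  classical
  refine ⟨⟨u, mem_comp_self hu⟩, Set.disjoint_left.mpr fun v hv => comp_not_mem hv, ?_,
    fun a ha v hvU hadj => comp_closed ha hvU hadj⟩
  haveI : Nonempty (comp G U u) := ⟨⟨u, mem_comp_self hu⟩⟩
  apply Connected.mk
  rintro ⟨a, ha⟩ ⟨b, hb⟩
  obtain ⟨p, hp⟩ := (comp_symm ha : u ∈ comp G U a)
  have hb2 : b ∈ comp G U u := hb
  obtain ⟨q, hq⟩ := hb2
  have hpq : ∀ w ∈ (p.append q).support, w ∈ comp G U u := by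
    intro w hw
    rw [Walk.mem_support_append_iff] at hw
    rcases hw with hw | hw
    · have hw' : w ∈ p.reverse.support := by
        rwa [Walk.support_reverse, List.mem_reverse]
      refine ⟨p.reverse.takeUntil w hw', fun x hx => ?_⟩
      have hx' := Walk.support_takeUntil_subset _ hw' hx
      rw [Walk.support_reverse, List.mem_reverse] at hx'
      exact hp x hx'
    · exact ⟨q.takeUntil w hw, fun x hx => hq x (Walk.support_takeUntil_subset _ _ hx)⟩
  exact reachable_induce_of_walk (p.append q) hpq ha ⟨q, hq⟩

/-- Along any walk from inside `C` to outside `C` there is a boundary edge. -/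
lemma exists_boundary {C : Set V} {a b : V} (p : G.Walk a b) :
    a ∈ C → b ∉ C → ∃ x ∈ C, ∃ y, y ∉ C ∧ G.Adj x y := by
  induction p with
  | nil => exact fun ha hb => absurd ha hb
  | @cons a c b h q ih =>
    intro ha hb
    by_cases hc : c ∈ C
    · exact ih hc hb
    · exact ⟨a, ha, c, hc, h⟩

/-! ### Parent trees -/

/-- The tree given by a parent function. -/
def parentT {ℓ : ℕ} (P : Fin ℓ → Fin ℓ) : SimpleGraph (Fin ℓ) :=
  SimpleGraph.fromRel (fun a b => a = P b)

lemma parentT_adj {ℓ : ℕ} (P : Fin ℓ → Fin ℓ) (a b : Fin ℓ) :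
    (parentT P).Adj a b ↔ a ≠ b ∧ (a = P b ∨ b = P a) := by
  simp [parentT, fromRel_adj]

lemma parentT_connected {ℓ : ℕ} [NeZero ℓ] (P : Fin ℓ → Fin ℓ)
    (hP : ∀ i, i ≠ 0 → P i < i) : (parentT P).Connected := by
  have key : ∀ n (a : Fin ℓ), a.val ≤ n → (parentT P).Reachable a 0 := by
    intro n
    induction n with
    | zero =>
      intro a ha
      have : a = 0 := by
        apply Fin.ext; simpa using Nat.le_zero.mp ha
      exact this ▸ Reachable.refl _
    | succ n ih =>
      intro a ha
      by_cases h : a = 0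
      · exact h ▸ Reachable.refl _
      · have hlt := hP a h
        have hadj : (parentT P).Adj a (P a) := by
          rw [parentT_adj]; exact ⟨hlt.ne', Or.inr rfl⟩
        exact hadj.reachable.trans (ih (P a) (by omega))
  exact ⟨fun a b => (key _ a le_rfl).trans (key _ b le_rfl).symm⟩

lemma mem_tail_reverse {α : Type*} (x : α) {t : List α} (ht : t ≠ []) :
    x ∈ (x :: t).reverse.tail := by
  obtain ⟨h, r, hr⟩ := List.exists_cons_of_ne_nil (List.reverse_ne_nil_iff.mpr ht)
  simp [List.reverse_cons, hr]

lemma no_cycle_at_max {ℓ : ℕ} (P : Fin ℓ → Fin ℓ) (hP : ∀ i, P i ≤ i) {m : Fin ℓ}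
    (c : (parentT P).Walk m m) (hc : c.IsCycle) (hmax : ∀ x ∈ c.support, x ≤ m) : False := by
  -- `b` below `m` adjacent to `m` forces `b = P m`.
  have forced : ∀ b : Fin ℓ, (parentT P).Adj m b → b ≤ m → b = P m := by
    intro b hadj hb
    rw [parentT_adj] at hadj
    rcases hadj.2 with h1 | h2
    · -- m = P b ≤ b ≤ m, so b = m, contradiction
      exact absurd (le_antisymm hb (h1 ▸ hP b)) (Ne.symm hadj.1)
    · exact h2
  cases c with
  | nil => exact hc.ne_nil rfl
  | @cons _ b _ h q =>
    have hb : b = P m := forced b h (hmax b (by simp))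
    -- decompose the reverse
    have hnil : ¬ (Walk.cons h q).reverse.Nil := by
      rw [Walk.not_nil_iff_lt_length, Walk.length_reverse]
      have := hc.three_le_length; omega
    obtain ⟨b', hadj', q', hq'⟩ := Walk.not_nil_iff.mp hnil
    have hb'mem : b' ∈ (Walk.cons h q).support := by
      have : b' ∈ (Walk.cons h q).reverse.support := by
        rw [hq']; simp
      rwa [Walk.support_reverse, List.mem_reverse] at this
    have hb' : b' = P m := forced b' hadj' (hmax b' hb'mem)
    -- edge-list contradiction
    have hedges : (Walk.cons h q).edges.reverse = s(m, b') :: q'.edges := by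
      rw [← Walk.edges_reverse, hq', Walk.edges_cons]
    have hnodup : (Walk.cons h q).edges.reverse.Nodup :=
      List.nodup_reverse.mpr hc.isTrail.edges_nodup
    rw [hedges] at hnodup
    have hmem : s(m, b') ∈ q'.edges := by
      have hqne : q.edges ≠ [] := by
        have h3 := hc.three_le_length
        have : q.edges.length = q.length := Walk.length_edges q
        intro hnil2
        rw [hnil2] at this
        simp only [Walk.length_cons, List.length_nil] at this h3
        omega
      have : s(m, b) ∈ (s(m, b) :: q.edges).reverse.tail := mem_tail_reverse _ hqne
      have htail : (Walk.cons h q).edges.reverse.tail = q'.edges := by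
        rw [hedges]; rfl
      rw [← Walk.edges_cons h q] at this
      rw [htail] at this
      rwa [hb, ← hb'] at this
    exact (List.nodup_cons.mp hnodup).1 hmem

lemma parentT_isAcyclic {ℓ : ℕ} (P : Fin ℓ → Fin ℓ) (hP : ∀ i, P i ≤ i) :
    (parentT P).IsAcyclic := by
  intro v c hc
  -- maximum of the support
  have hne : c.support.toFinset.Nonempty := by
    simp [List.toFinset_nonempty_iff]
  set m := c.support.toFinset.max' hne with hm
  have hmmem : m ∈ c.support := by
    have := c.support.toFinset.max'_mem hne
    simpa using this
  have hmax : ∀ x ∈ c.support, x ≤ m := fun x hx =>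
    c.support.toFinset.le_max' x (by simpa using hx)
  -- rotate
  have hc' := hc.rotate hmmem
  refine no_cycle_at_max P hP (c.rotate m hmmem) hc' ?_
  intro x hx
  rw [Walk.support_eq_cons] at hx
  rcases List.mem_cons.mp hx with rfl | hx
  · exact le_rfl
  · have hrot := Walk.support_rotate c m hmmem
    have : x ∈ c.support.tail := hrot.mem_iff.mp hx
    exact hmax x (List.mem_of_mem_tail this)

lemma parentT_isTree {ℓ : ℕ} [NeZero ℓ] (P : Fin ℓ → Fin ℓ)
    (hP0 : ∀ i, i ≠ 0 → P i < i) (hP : ∀ i, P i ≤ i) : (parentT P).IsTree :=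
  ⟨parentT_connected P hP0, parentT_isAcyclic P hP⟩

end TWAux

/-- **Lemma 3.1.** Contracting each part of a connected decomposition of width
`k` of a connected graph `G` yields a graph of tree-width at most `k`. -/
theorem treewidth_contraction_le (G : SimpleGraph V) (hG : G.Connected)
    {ℓ : ℕ} (H : Fin ℓ → Set V) (k : ℕ)
    (hdec : IsDecomp H) (hconn : IsConnectedDecomp G H) (hw : WidthLE G H k) :
    treewidth (SimpleGraph.fromRel fun i j : Fin ℓ => LinkedTo G (H i) (H j)) ≤ k := by
  classical
  obtain ⟨v0⟩ := hG.nonempty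
  obtain ⟨i0, -⟩ := hdec.2.2 v0
  have hℓ : 0 < ℓ := lt_of_le_of_lt (Nat.zero_le _) i0.2
  haveI : NeZero ℓ := ⟨hℓ.ne'⟩
  have hposof : ∀ i : Fin ℓ, i ≠ 0 → (0 : Fin ℓ) < i := by
    intro i hi
    rcases Nat.eq_zero_or_pos i.val with h0 | h0
    · exact absurd (Fin.ext (by simp [h0])) hi
    · rw [Fin.lt_def]; simpa using h0
  obtain ⟨hne, hdisj, -⟩ := hdec
  choose u hu using hne
  have hHdisjbef : ∀ i : Fin ℓ, Disjoint (H i) (before H i) := by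
    intro i
    rw [Set.disjoint_right]
    rintro v ⟨j, hj, hvj⟩ hvi
    exact Set.disjoint_left.mp (hdisj j i hj.ne) hvj hvi
  have hunb : ∀ i, u i ∉ before H i := fun i => Set.disjoint_left.mp (hHdisjbef i) (hu i)
  set C : Fin ℓ → Set V := fun i => TWAux.comp G (before H i) (u i) with hC
  have hcomp : ∀ i, IsCompOf G (before H i) (C i) := fun i => TWAux.isCompOf_comp (hunb i)
  have hHsubC : ∀ i, H i ⊆ C i := fun i =>
    TWAux.subset_comp_of_induce_connected (hconn i) (hHdisjbef i) (hu i)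
  have hbefmono : ∀ {i j : Fin ℓ}, i ≤ j → before H i ⊆ before H j := by
    intro i j hij v hv
    obtain ⟨j', hj', hv⟩ := hv
    exact ⟨j', lt_of_lt_of_le hj' hij, hv⟩
  set S : Fin ℓ → Set (Fin ℓ) := fun i => {j | j < i ∧ LinkedTo G (H j) (C i)} with hS
  have hSfin : ∀ i, (S i).Finite := fun i => Set.toFinite _
  -- the key nesting property
  have keysub : ∀ i j : Fin ℓ, j < i → LinkedTo G (H j) (C i) → C i ⊆ C j := by
    intro i j hji hlink v hv
    obtain ⟨x, hx, y, hy, hxy⟩ := hlink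
    have hxCj : x ∈ C j := hHsubC j hx
    have hynb : y ∉ before H j := fun hb =>
      (TWAux.comp_not_mem hy) (hbefmono hji.le hb)
    have hyCj : y ∈ C j := TWAux.comp_closed hxCj hynb hxy
    -- v ∈ comp (before i) y ⊆ comp (before j) y
    have hv' : v ∈ TWAux.comp G (before H i) y :=
      TWAux.comp_trans (TWAux.comp_symm hy) hv
    have hv'' : v ∈ TWAux.comp G (before H j) y :=
      TWAux.comp_mono (hbefmono hji.le) hv'
    exact TWAux.comp_trans hyCj hv''
  -- nonemptiness of S for nonzero indices
  have hSne : ∀ i : Fin ℓ, i ≠ 0 → (S i).Nonempty := by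
    intro i hi
    have h0i : (0 : Fin ℓ) < i := hposof i hi
    have hw0 : u 0 ∈ before H i := ⟨0, h0i, hu 0⟩
    have hw0n : u 0 ∉ C i := fun hmem => (TWAux.comp_not_mem hmem) hw0
    obtain ⟨p⟩ := hG.preconnected (u i) (u 0)
    obtain ⟨x, hx, y, hy, hxy⟩ :=
      TWAux.exists_boundary p (TWAux.mem_comp_self (hunb i)) hw0n
    have hybef : y ∈ before H i := by
      by_contra hyb
      exact hy (TWAux.comp_closed hx hyb hxy)
    obtain ⟨j, hj, hyH⟩ := hybef
    exact ⟨j, hj, y, hyH, x, hx, hxy.symm⟩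
  -- the parent function
  set P : Fin ℓ → Fin ℓ := fun i =>
    if h : ((hSfin i).toFinset).Nonempty then (hSfin i).toFinset.max' h else i with hPdef
  have hPpos : ∀ i, ∀ h : ((hSfin i).toFinset).Nonempty,
      P i = (hSfin i).toFinset.max' h := by
    intro i h
    rw [hPdef]
    exact dif_pos h
  have hPneg : ∀ i, ¬ ((hSfin i).toFinset).Nonempty → P i = i := by
    intro i h
    rw [hPdef]
    exact dif_neg h
  have hPmemS : ∀ i : Fin ℓ, i ≠ 0 → P i ∈ S i := by
    intro i hi
    have h : ((hSfin i).toFinset).Nonempty := by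
      obtain ⟨j, hj⟩ := hSne i hi
      exact ⟨j, (Set.Finite.mem_toFinset _).mpr hj⟩
    have hmem := (hSfin i).toFinset.max'_mem h
    rw [Set.Finite.mem_toFinset] at hmem
    rwa [hPpos i h]
  have hPlt : ∀ i : Fin ℓ, i ≠ 0 → P i < i := fun i hi => (hPmemS i hi).1
  have hPle : ∀ i : Fin ℓ, P i ≤ i := by
    intro i
    by_cases hi : i = 0
    · subst hi
      have h0 : ¬ ((hSfin (0 : Fin ℓ)).toFinset).Nonempty := by
        rw [Set.Finite.toFinset_nonempty]
        rintro ⟨j, hj, -⟩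
        exact absurd hj (by simp)
      rw [hPneg 0 h0]
    · exact (hPlt i hi).le
  have hPmax : ∀ i : Fin ℓ, ∀ j ∈ S i, j ≤ P i := by
    intro i j hj
    have hi : i ≠ 0 := by
      intro h0; subst h0
      exact absurd hj.1 (by simp)
    have h : ((hSfin i).toFinset).Nonempty := ⟨j, (Set.Finite.mem_toFinset _).mpr hj⟩
    have hle := (hSfin i).toFinset.le_max' j ((Set.Finite.mem_toFinset _).mpr hj)
    rwa [hPpos i h]
  -- the bags
  set X : Fin ℓ → Finset (Fin ℓ) := fun i => insert i (hSfin i).toFinset with hX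
  have hmemX : ∀ j i : Fin ℓ, j ∈ X i ↔ j = i ∨ j ∈ S i := by
    intro j i
    simp [hX, hS, Set.Finite.mem_toFinset]
  -- LinkedTo is monotone in the second argument
  have hlinkmono : ∀ {A C1 C2 : Set V}, C1 ⊆ C2 → LinkedTo G A C1 → LinkedTo G A C2 := by
    rintro A C1 C2 hsub ⟨x, hx, y, hy, hxy⟩
    exact ⟨x, hx, y, hsub hy, hxy⟩
  -- membership propagates to the parent
  have hprop : ∀ t j : Fin ℓ, j ∈ S t → j ∈ X (P t) := by
    intro t j hj
    have ht0 : t ≠ 0 := by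
      intro h0; subst h0
      exact absurd hj.1 (by simp)
    have hPS := hPmemS t ht0
    rcases eq_or_lt_of_le (hPmax t j hj) with heq | hlt
    · exact (hmemX j (P t)).mpr (Or.inl heq)
    · refine (hmemX j (P t)).mpr (Or.inr ⟨hlt, ?_⟩)
      exact hlinkmono (keysub t (P t) hPS.1 hPS.2) hj.2
  apply Nat.sInf_le
  refine ⟨Fin ℓ, inferInstance, TWAux.parentT P, X,
    TWAux.parentT_isTree P hPlt hPle, fun j => ⟨j, Finset.mem_insert_self _ _⟩, ?_, ?_, ?_⟩
  · -- edges covered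
    intro a b hab
    rw [fromRel_adj] at hab
    obtain ⟨hne', hl⟩ := hab
    have hsym : ∀ a b : Fin ℓ, a < b →
        (LinkedTo G (H a) (H b) ∨ LinkedTo G (H b) (H a)) → ∃ t, a ∈ X t ∧ b ∈ X t := by
      intro a b hab hl
      have hlk : LinkedTo G (H a) (C b) := by
        rcases hl with ⟨x, hx, y, hy, hxy⟩ | ⟨x, hx, y, hy, hxy⟩
        · exact ⟨x, hx, y, hHsubC b hy, hxy⟩
        · exact ⟨y, hy, x, hHsubC b hx, hxy.symm⟩
      exact ⟨b, (hmemX a b).mpr (Or.inr ⟨hab, hlk⟩), Finset.mem_insert_self _ _⟩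
    rcases lt_or_gt_of_ne hne' with h | h
    · exact hsym a b h hl
    · obtain ⟨t, hbt, hat⟩ := hsym b a h hl.symm
      exact ⟨t, hat, hbt⟩
  · -- bag connectivity
    intro j
    have hjA : j ∈ {t | j ∈ X t} := Finset.mem_insert_self _ _
    haveI : Nonempty {t | j ∈ X t} := ⟨⟨j, hjA⟩⟩
    apply SimpleGraph.Connected.mk
    have key : ∀ n : ℕ, ∀ t : Fin ℓ, ∀ ht : t ∈ {t | j ∈ X t}, t.val ≤ n →
        ((TWAux.parentT P).induce {t | j ∈ X t}).Reachable ⟨t, ht⟩ ⟨j, hjA⟩ := by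
      intro n
      induction n with
      | zero =>
        intro t ht htn
        have ht0 : t = 0 := Fin.ext (by simpa using Nat.le_zero.mp htn)
        rcases (hmemX j t).mp ht with heq | hjS
        · exact (Subtype.ext heq.symm : (⟨t, ht⟩ : {t | j ∈ X t}) = ⟨j, hjA⟩) ▸ Reachable.refl _
        · exact absurd hjS.1 (by simp [ht0])
      | succ n ih =>
        intro t ht htn
        rcases (hmemX j t).mp ht with heq | hjS
        · exact (Subtype.ext heq.symm : (⟨t, ht⟩ : {t | j ∈ X t}) = ⟨j, hjA⟩) ▸ Reachable.refl _
        · have ht0 : t ≠ 0 := by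
            intro h0; subst h0
            exact absurd hjS.1 (by simp)
          have hPA : P t ∈ {t | j ∈ X t} := hprop t j hjS
          have hadj : ((TWAux.parentT P).induce {t | j ∈ X t}).Adj ⟨t, ht⟩ ⟨P t, hPA⟩ := by
            show (TWAux.parentT P).Adj t (P t)
            rw [TWAux.parentT_adj]
            exact ⟨(hPlt t ht0).ne', Or.inr rfl⟩
          have hrec := ih (P t) hPA (by have := hPlt t ht0; omega)
          exact hadj.reachable.trans hrec
    rintro ⟨a, ha⟩ ⟨b, hb⟩
    exact (key a.val a ha le_rfl).trans (key b.val b hb le_rfl).symm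
  · -- bag sizes
    intro t
    have h1 : (X t).card ≤ (hSfin t).toFinset.card + 1 := Finset.card_insert_le _ _
    have h2 : (hSfin t).toFinset.card = (S t).ncard :=
      (Set.ncard_eq_toFinset_card _ (hSfin t)).symm
    have h3 : (S t).ncard ≤ k := hw t (C t) (hcomp t)
    omega
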